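/- The word (0001)^ω contains no factor of the form x·g(x)·x·g(x), where x is a nonempty binary word and g(x) is the reverse complement of x. -/

import Mathlib

/-- `L` is a factor of the periodic infinite word `(0001)^ω`. -/
def IsFactorP (L : List Bool) : Prop :=
  ∃ n, L <:+: (List.replicate n [false, false, false, true]).flatten

private abbrev Wc : List Bool := [false, false, false, true]

private lemma W_succ (n : ℕ) :
    (List.replicate (n+1) Wc).flatten = Wc ++ (List.replicate n Wc).flatten := by
  simp [List.replicate_succ]

private lemma suffix_cases {α} {t a b : List α} (h : t <:+ a ++ b) :
    t <:+ b ∨ ∃ r, r <:+ a ∧ t = r ++ b := by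
  obtain ⟨s, hs⟩ := h
  rcases List.append_eq_append_iff.mp hs with ⟨a', h1, h2⟩ | ⟨c', h1, h2⟩
  · exact Or.inr ⟨a', ⟨s, h1.symm⟩, h2⟩
  · exact Or.inl ⟨c', h2.symm⟩

private lemma prefix_cases {α} {p a b : List α} (h : p <+: a ++ b) :
    p <+: a ∨ ∃ q, q <+: b ∧ p = a ++ q := by
  obtain ⟨s, hs⟩ := h
  rcases List.append_eq_append_iff.mp hs with ⟨a', h1, h2⟩ | ⟨c', h1, h2⟩
  · exact Or.inl ⟨a', h1.symm⟩
  · exact Or.inr ⟨c', ⟨s, h2.symm⟩, h1⟩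

private lemma prefix_Wc {p : List Bool} (h : p <+: Wc) : 4 * p.count true ≤ p.length := by
  have h4 : p.length ≤ 4 := h.length_le
  have hp := List.prefix_iff_eq_take.mp h
  interval_cases h' : p.length <;> simp_all [Wc]

private lemma prefix_W {n : ℕ} {p : List Bool}
    (h : p <+: (List.replicate n Wc).flatten) : 4 * p.count true ≤ p.length := by
  induction n generalizing p with
  | zero => simp_all
  | succ n ih =>
    rw [W_succ] at h
    rcases prefix_cases h with h' | ⟨q, hq, rfl⟩
    · exact prefix_Wc h'
    · have h1 := ih hq
      have h2 : Wc.count true = 1 := by decide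
      simp [List.count_append, h2]
      omega

private lemma suffix_W {n : ℕ} {t : List Bool}
    (h : t <:+ (List.replicate n Wc).flatten) :
    ∃ m r, r <:+ Wc ∧ t = r ++ (List.replicate m Wc).flatten := by
  induction n generalizing t with
  | zero =>
    simp only [List.replicate_zero, List.flatten_nil, List.suffix_nil] at h
    exact ⟨0, [], by simp [h]⟩
  | succ n ih =>
    rw [W_succ] at h
    rcases suffix_cases h with h' | ⟨r, hr, rfl⟩
    · exact ih h'
    · exact ⟨n, r, hr, rfl⟩

private lemma infix_W {n : ℕ} {L : List Bool}
    (h : L <:+: (List.replicate n Wc).flatten) : 4 * L.count true ≤ L.length + 3 := by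
  obtain ⟨t, hpre, hsuf⟩ := List.infix_iff_prefix_suffix.mp h
  obtain ⟨m, r, hr, rfl⟩ := suffix_W hsuf
  have hrc : r.count true ≤ 1 := by
    have := (hr.sublist.count_le true)
    simpa using this
  rcases prefix_cases hpre with h' | ⟨q, hq, rfl⟩
  · have h1 : L.count true ≤ r.count true :=
      h'.sublist.count_le true
    have h2 : L.count true ≤ L.length := List.count_le_length
    omega
  · have h1 := prefix_W hq
    have h2 : r.count true ≤ r.length := List.count_le_length
    simp only [List.count_append, List.length_append]
    omega

theorem stmt4 (x : List Bool) (hx : x ≠ []) :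
    ¬ IsFactorP (x ++ (List.map (fun b => !b) x).reverse ++ x ++ (List.map (fun b => !b) x).reverse) := by
  rintro ⟨n, h⟩
  have hcount : ((List.map (fun b => !b) x).reverse).count true = x.count false := by
    rw [List.count_reverse]
    have : (fun b => !b) false = true := rfl
    rw [← this, List.count_map_of_injective x _ (by decide : Function.Injective (fun b : Bool => !b))]
  have hlen : ((List.map (fun b => !b) x).reverse).length = x.length := by simp
  have hb := infix_W h
  simp only [List.count_append, List.length_append, hcount, hlen] at hb
  have hcf : x.count true + x.count false = x.length := by
    simp [List.count_true_add_count_false]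
  have hxl : 0 < x.length := List.length_pos_iff.mpr hx
  omega
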